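/- Let g be a finite-dimensional complex Lie algebra admitting a periodic derivation (a derivation D with D^m = id for some m ≥ 1). Then g is nilpotent of class at most two, i.e., [g,[g,g]] = 0. -/

import Mathlib

open Module.End Polynomial

lemma unit_sum_eq' {x y : ℂ} (hx : ‖x‖ = 1) (hy : ‖y‖ = 1)
    (hxy : ‖x + y‖ = 1) : x^2 + x*y + y^2 = 0 := by
  have h1 : x * (starRingEnd ℂ) x = 1 := by
    rw [Complex.mul_conj]; norm_cast; simp [Complex.normSq_eq_norm_sq, hx]
  have h2 : y * (starRingEnd ℂ) y = 1 := by
    rw [Complex.mul_conj]; norm_cast; simp [Complex.normSq_eq_norm_sq, hy]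
  have h3 : (x + y) * ((starRingEnd ℂ) x + (starRingEnd ℂ) y) = 1 := by
    rw [← map_add, Complex.mul_conj]; norm_cast; simp [Complex.normSq_eq_norm_sq, hxy]
  linear_combination (x*y)*h3 - (x*y + y^2)*h1 - (x^2 + x*y)*h2

lemma key_arith' {a b c : ℂ} (ha : ‖a‖ = 1) (hb : ‖b‖ = 1)
    (hc : ‖c‖ = 1) (hbc : ‖b + c‖ = 1)
    (habc : ‖a + b + c‖ = 1) (hab : ‖a + b‖ = 1) : False := by
  have e1 : b^2 + b*c + c^2 = 0 := unit_sum_eq' hb hc hbc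
  have e2 : a^2 + a*(b+c) + (b+c)^2 = 0 := unit_sum_eq' ha hbc (by rwa [← add_assoc])
  have e3 : a^2 + a*b + b^2 = 0 := unit_sum_eq' ha hb hab
  have h4 : c*(a+b) - b^2 = 0 := by linear_combination e2 - e3 - e1
  have h5 : (2:ℂ) * b^3 * (a+b) = 0 := by
    linear_combination (a+b)^2*e1 - (b*(a+b) + c*(a+b) + b^2)*h4 - b^2*e3
  have hbne : b ≠ 0 := fun h => by simp [h] at hb
  have habne : a + b ≠ 0 := fun h => by simp [h] at hab
  rcases mul_eq_zero.mp h5 with h | h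
  · rcases mul_eq_zero.mp h with h | h
    · norm_num at h
    · exact hbne (pow_eq_zero_iff (by norm_num) |>.mp h)
  · exact habne h

lemma abs_of_pow_eq_one {μ : ℂ} {m : ℕ} (hm : 1 ≤ m) (h : μ ^ m = 1) :
    ‖μ‖ = 1 := by
  have h2 : ‖μ‖ ^ m = 1 := by rw [← norm_pow, h, norm_one]
  rcases (pow_eq_one_iff_cases).mp h2 with h | h | h
  · omega
  · exact h
  · exfalso; nlinarith [norm_nonneg μ, h.1]

theorem two_step_of_periodic_derivation (L : Type*) [LieRing L] [LieAlgebra ℂ L]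
    [FiniteDimensional ℂ L] (D : LieDerivation ℂ L L) (m : ℕ) (hm : 1 ≤ m)
    (hDm : D.toLinearMap ^ m = 1) :
    ∀ x y z : L, ⁅x, ⁅y, z⁆⁆ = 0 := by
  -- basic eigen facts
  have hpow : ∀ (v : L) (μ : ℂ), D v = μ • v → ∀ k : ℕ, (D.toLinearMap ^ k) v = μ ^ k • v := by
    intro v μ h k
    induction k with
    | zero => simp
    | succ n ih =>
      rw [pow_succ, Module.End.mul_apply, LieDerivation.coeFn_coe, h, map_smul, ih,
        smul_smul, ← pow_succ']
  have hroot : ∀ (v : L) (μ : ℂ), v ≠ 0 → D v = μ • v → μ ^ m = 1 := by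
    intro v μ hv h
    have h1 := hpow v μ h m
    rw [hDm, Module.End.one_apply] at h1
    have h2 : (μ ^ m - 1) • v = 0 := by rw [sub_smul, one_smul, ← h1, sub_self]
    rcases smul_eq_zero.mp h2 with h3 | h3
    · exact sub_eq_zero.mp h3
    · exact absurd h3 hv
  have hbr : ∀ (u w : L) (μ ν : ℂ), D u = μ • u → D w = ν • w →
      D ⁅u, w⁆ = (μ + ν) • ⁅u, w⁆ := by
    intro u w μ ν hu hw
    rw [LieDerivation.apply_lie_eq_add, hu, hw, smul_lie, lie_smul]
    module
  -- the set of eigenvectors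
  set E : Set L := {v | ∃ μ : ℂ, D v = μ • v} with hE
  -- core: eigenvector case
  have hcore : ∀ x ∈ E, ∀ y ∈ E, ∀ z ∈ E, ⁅x, ⁅y, z⁆⁆ = 0 := by
    rintro x ⟨a, hxa⟩ y ⟨b, hyb⟩ z ⟨c, hzc⟩
    by_contra hne
    have hyz0 : ⁅y, z⁆ ≠ 0 := fun h => hne (by rw [h, lie_zero])
    have hx0 : x ≠ 0 := fun h => hne (by rw [h, zero_lie])
    have hy0 : y ≠ 0 := fun h => hyz0 (by rw [h, zero_lie])
    have hz0 : z ≠ 0 := fun h => hyz0 (by rw [h, lie_zero])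
    have hDyz : D ⁅y, z⁆ = (b + c) • ⁅y, z⁆ := hbr y z b c hyb hzc
    have hDxyz : D ⁅x, ⁅y, z⁆⁆ = (a + b + c) • ⁅x, ⁅y, z⁆⁆ := by
      rw [hbr x ⁅y, z⁆ a (b + c) hxa hDyz, add_assoc]
    have ha1 := abs_of_pow_eq_one hm (hroot x a hx0 hxa)
    have hb1 := abs_of_pow_eq_one hm (hroot y b hy0 hyb)
    have hc1 := abs_of_pow_eq_one hm (hroot z c hz0 hzc)
    have hbc1 := abs_of_pow_eq_one hm (hroot _ _ hyz0 hDyz)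
    have habc1 := abs_of_pow_eq_one hm (hroot _ _ hne hDxyz)
    have hxy0 : ⁅x, y⁆ = 0 := by
      by_contra h
      exact key_arith' ha1 hb1 hc1 hbc1 habc1
        (abs_of_pow_eq_one hm (hroot _ _ h (hbr x y a b hxa hyb)))
    have hxz0 : ⁅x, z⁆ = 0 := by
      by_contra h
      refine key_arith' ha1 hc1 hb1 (by rwa [add_comm c b])
        (by rwa [show a + c + b = a + b + c from by ring])
        (abs_of_pow_eq_one hm (hroot _ _ h (hbr x z a c hxa hzc)))
    exact hne (by rw [leibniz_lie, hxy0, hxz0, zero_lie, lie_zero, add_zero])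
  -- eigenvectors span
  have hpoly : aeval D.toLinearMap (X ^ m - 1 : ℂ[X]) = 0 := by
    rw [map_sub, map_pow, aeval_X, map_one, hDm, sub_self]
  have hsq : Squarefree (X ^ m - 1 : ℂ[X]) := by
    have h := Polynomial.separable_X_pow_sub_C (1 : ℂ)
      ((Nat.cast_ne_zero (R := ℂ)).mpr (Nat.one_le_iff_ne_zero.mp hm)) one_ne_zero
    rw [map_one] at h
    exact h.squarefree
  have hss := Module.End.isSemisimple_of_squarefree_aeval_eq_zero hsq hpoly
  have hfs := hss.isFinitelySemisimple
  have htop : ⨆ μ : ℂ, Module.End.eigenspace D.toLinearMap μ = ⊤ := by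
    have h1 := Module.End.iSup_maxGenEigenspace_eq_top (D.toLinearMap)
    simp only [hfs.maxGenEigenspace_eq_eigenspace] at h1
    exact h1
  have hspanE : Submodule.span ℂ E = ⊤ := by
    rw [eq_top_iff, ← htop, Submodule.iSup_eq_span]
    refine Submodule.span_mono ?_
    rintro v ⟨s, ⟨μ, rfl⟩, hv⟩
    exact ⟨μ, by have := mem_eigenspace_iff.mp hv; rwa [LieDerivation.coeFn_coe] at this⟩
  have hmemspan : ∀ v : L, v ∈ Submodule.span ℂ E := by
    intro v; rw [hspanE]; trivial
  -- extend by linearity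
  have step1 : ∀ x ∈ E, ∀ y ∈ E, ∀ z : L, ⁅x, ⁅y, z⁆⁆ = 0 := by
    intro x hx y hy z
    induction hmemspan z using Submodule.span_induction with
    | mem w hw => exact hcore x hx y hy w hw
    | zero => simp
    | add u v _ _ hu hv => rw [lie_add, lie_add, hu, hv, add_zero]
    | smul t u _ hu => rw [lie_smul, lie_smul, hu, smul_zero]
  have step2 : ∀ x ∈ E, ∀ y z : L, ⁅x, ⁅y, z⁆⁆ = 0 := by
    intro x hx y z
    induction hmemspan y using Submodule.span_induction with
    | mem w hw => exact step1 x hx w hw z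
    | zero => simp
    | add u v _ _ hu hv => rw [add_lie, lie_add, hu, hv, add_zero]
    | smul t u _ hu => rw [smul_lie, lie_smul, hu, smul_zero]
  intro x y z
  induction hmemspan x using Submodule.span_induction with
  | mem w hw => exact step2 w hw y z
  | zero => simp
  | add u v _ _ hu hv => rw [add_lie, hu, hv, add_zero]
  | smul t u _ hu => rw [smul_lie, hu, smul_zero]
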